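/- For every complex number s with Re(s) > 1, the family ((1 - q^{-s·deg π})^{-1}) indexed by the monic irreducible polynomials π in F_q[X] is multipliable, and its product equals the sum of the summable family (q^{-s·deg f}) indexed by all monic polynomials f in F_q[X]; in particular this product equals (1 - q^{1-s})^{-1}. -/

import Mathlib

open Polynomial UniqueFactorizationMonoid

namespace Stmt9Aux

variable {F : Type*} [Field F] [Fintype F] [DecidableEq F]

theorem monic_assoc_eq {a b : Polynomial F} (ha : a.Monic) (hb : b.Monic)
    (h : Associated a b) : a = b := by
  rw [← ha.normalize_eq_self, ← hb.normalize_eq_self,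
    normalize_eq_normalize_iff.mpr ⟨h.dvd, h.symm.dvd⟩]

theorem infinite_monic_irred :
    {π : Polynomial F | π.Monic ∧ Irreducible π}.Infinite := by
  intro hfin
  set S := hfin.toFinset with hS
  set P : Polynomial F := X * ∏ π ∈ S, π with hP
  have hPmonic : P.Monic :=
    monic_X.mul (monic_prod_of_monic _ _ fun π hπ => (hfin.mem_toFinset.mp hπ).1)
  have hPdeg : 0 < P.natDegree := by
    have h1 : (X : Polynomial F).natDegree ≤ P.natDegree :=
      natDegree_le_of_dvd (dvd_mul_right _ _) hPmonic.ne_zero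
    exact lt_of_lt_of_le (by simp) h1
  have hdeglt : (1 : Polynomial F).degree < P.degree := by
    rw [degree_eq_natDegree hPmonic.ne_zero]
    exact lt_of_le_of_lt degree_one_le (by exact_mod_cast hPdeg)
  have hQ : ¬IsUnit (P + 1) := by
    refine not_isUnit_of_natDegree_pos _ ?_
    rw [natDegree_pos_iff_degree_pos, degree_add_eq_left_of_degree_lt hdeglt]
    rw [degree_eq_natDegree hPmonic.ne_zero]
    exact_mod_cast hPdeg
  obtain ⟨π₀, hmon, hirr, hdvd⟩ := exists_monic_irreducible_factor (P + 1) hQ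
  have hmem : π₀ ∈ S := hfin.mem_toFinset.mpr ⟨hmon, hirr⟩
  have hdvdP : π₀ ∣ P := Dvd.dvd.mul_left (Finset.dvd_prod_of_mem _ hmem) X
  exact hirr.not_isUnit (isUnit_of_dvd_one ((dvd_add_right hdvdP).mp hdvd))

theorem countable_poly : Countable (Polynomial F) :=
  Function.Injective.countable
    (f := fun p : Polynomial F => (⟨p.support, p.coeff, fun _ => mem_support_iff⟩ : ℕ →₀ F))
    (fun p q h => Polynomial.ext fun n => DFunLike.congr_fun h n)

theorem mem_nf_monic_irred {g π : Polynomial F} (hg : g ≠ 0)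
    (hπ : π ∈ normalizedFactors g) : π.Monic ∧ Irreducible π := by
  have h1 : normalize π = π := normalize_normalized_factor _ hπ
  have h2 : Irreducible π := irreducible_of_normalized_factor _ hπ
  exact ⟨h1 ▸ monic_normalize h2.ne_zero, h2⟩

theorem nf_prod_monic {g : Polynomial F} (hg : g.Monic) :
    (normalizedFactors g).prod = g := by
  refine monic_assoc_eq ?_ hg (prod_normalizedFactors hg.ne_zero)
  have := monic_multiset_prod_of_monic (normalizedFactors g) id
    (fun π hπ => (mem_nf_monic_irred hg.ne_zero hπ).1)
  simpa using this

section E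
variable (e : {π : Polynomial F // π.Monic ∧ Irreducible π} ≃ Nat.Primes)

open Classical in
noncomputable def ee (π : Polynomial F) : ℕ :=
  if h : π.Monic ∧ Irreducible π then (e ⟨π, h⟩ : ℕ) else 1

/-- prime number to irreducible monic polynomial -/
noncomputable def pp (p : ℕ) : Polynomial F :=
  if h : p.Prime then (e.symm ⟨p, h⟩).1 else 1

theorem ee_prime {π : Polynomial F} (h : π.Monic ∧ Irreducible π) :
    (ee e π).Prime := by
  unfold ee; rw [dif_pos h]; exact (e ⟨π, h⟩).2

theorem pp_spec {p : ℕ} (hp : p.Prime) :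
    (pp e p).Monic ∧ Irreducible (pp e p) := by
  unfold pp; rw [dif_pos hp]; exact (e.symm ⟨p, hp⟩).2

theorem pp_ee {π : Polynomial F} (h : π.Monic ∧ Irreducible π) :
    pp e (ee e π) = π := by
  unfold ee pp; rw [dif_pos h, dif_pos (e ⟨π, h⟩).2]
  congr 1
  exact congrArg Subtype.val (e.symm_apply_apply ⟨π, h⟩)

theorem ee_pp {p : ℕ} (hp : p.Prime) : ee e (pp e p) = p := by
  unfold ee pp; rw [dif_pos hp, dif_pos (e.symm ⟨p, hp⟩).2]
  exact congrArg Subtype.val (e.apply_symm_apply (⟨p, hp⟩ : Nat.Primes))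

/-- transfer map: monic polynomial to positive natural number -/
noncomputable def Phi (g : Polynomial F) : ℕ :=
  ((normalizedFactors g).map (ee e)).prod

/-- weighted "degree" of a natural number -/
noncomputable def D (n : ℕ) : ℕ :=
  ((normalizedFactors n).map fun p => (pp e p : Polynomial F).natDegree).sum

theorem D_one : D e 1 = 0 := by simp [D]

theorem D_mul {m n : ℕ} (hm : m ≠ 0) (hn : n ≠ 0) :
    D e (m * n) = D e m + D e n := by
  rw [D, D, D, normalizedFactors_mul hm hn, Multiset.map_add, Multiset.sum_add]

theorem D_prime {p : ℕ} (hp : p.Prime) :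
    D e p = (pp e p : Polynomial F).natDegree := by
  rw [D, normalizedFactors_irreducible hp.prime.irreducible, normalize_eq]
  simp

theorem nf_Phi {g : Polynomial F} (hg : g.Monic) :
    normalizedFactors (Phi e g) = (normalizedFactors g).map (ee e) := by
  rw [Phi, normalizedFactors_prod_eq]
  · rw [Multiset.map_map]
    refine Multiset.map_congr rfl fun π hπ => normalize_eq _
  · intro p hp
    obtain ⟨π, hπ, rfl⟩ := Multiset.mem_map.mp hp
    exact (ee_prime e (mem_nf_monic_irred hg.ne_zero hπ)).prime.irreducible

theorem Phi_ne_zero {g : Polynomial F} (hg : g.Monic) : Phi e g ≠ 0 := by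
  rw [Phi]
  refine Multiset.prod_ne_zero fun h0 => ?_
  obtain ⟨π, hπ, h⟩ := Multiset.mem_map.mp h0
  rw [← h] at h0
  exact (ee_prime e (mem_nf_monic_irred hg.ne_zero hπ)).ne_zero h

theorem D_Phi {g : Polynomial F} (hg : g.Monic) : D e (Phi e g) = g.natDegree := by
  rw [D, nf_Phi e hg, Multiset.map_map]
  have h1 : ((normalizedFactors g).map fun π => (pp e (ee e π) : Polynomial F).natDegree)
      = (normalizedFactors g).map natDegree := by
    refine Multiset.map_congr rfl fun π hπ => ?_
    rw [pp_ee e (mem_nf_monic_irred hg.ne_zero hπ)]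
  rw [show ((fun p => (pp e p : Polynomial F).natDegree) ∘ ee e)
      = fun π => (pp e (ee e π) : Polynomial F).natDegree from rfl, h1]
  conv_rhs => rw [← nf_prod_monic hg]
  rw [natDegree_multiset_prod_of_monic _ (fun π hπ => (mem_nf_monic_irred hg.ne_zero hπ).1)]

theorem Phi_injOn {g₁ g₂ : Polynomial F} (h₁ : g₁.Monic) (h₂ : g₂.Monic)
    (h : Phi e g₁ = Phi e g₂) : g₁ = g₂ := by
  have hnf : (normalizedFactors g₁).map (ee e) = (normalizedFactors g₂).map (ee e) := by
    rw [← nf_Phi e h₁, ← nf_Phi e h₂, h]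
  have key : ∀ g : Polynomial F, g.Monic →
      ((normalizedFactors g).map (ee e)).map (pp e) = normalizedFactors g := by
    intro g hg
    rw [Multiset.map_map]
    refine (Multiset.map_congr rfl fun π hπ => ?_).trans (Multiset.map_id _)
    exact pp_ee e (mem_nf_monic_irred hg.ne_zero hπ)
  have : normalizedFactors g₁ = normalizedFactors g₂ := by
    rw [← key g₁ h₁, ← key g₂ h₂, hnf]
  rw [← nf_prod_monic h₁, ← nf_prod_monic h₂, this]

theorem Phi_surj {n : ℕ} (hn : n ≠ 0) :
    ∃ g : Polynomial F, g.Monic ∧ Phi e g = n := by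
  have hprime : ∀ p ∈ normalizedFactors n, Nat.Prime p :=
    fun p hp => Nat.prime_iff.mpr (prime_of_normalized_factor p hp)
  have hmonic : (((normalizedFactors n).map (pp e)).prod).Monic := by
    have := monic_multiset_prod_of_monic ((normalizedFactors n).map (pp e)) id
      (fun π hπ => by
        obtain ⟨p, hp, rfl⟩ := Multiset.mem_map.mp hπ
        exact (pp_spec e (hprime p hp)).1)
    simpa using this
  refine ⟨((normalizedFactors n).map (pp e)).prod, hmonic, ?_⟩
  rw [Phi, normalizedFactors_prod_eq]
  · rw [Multiset.map_map, Multiset.map_map]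
    have h1 : (normalizedFactors n).map ((ee e ∘ normalize) ∘ pp e) = normalizedFactors n := by
      refine (Multiset.map_congr rfl fun p hp => ?_).trans (Multiset.map_id _)
      show ee e (normalize (pp e p)) = p
      rw [(pp_spec e (hprime p hp)).1.normalize_eq_self, ee_pp e (hprime p hp)]
    rw [h1]
    exact associated_iff_eq.mp (prod_normalizedFactors hn)
  · intro π hπ
    obtain ⟨p, hp, rfl⟩ := Multiset.mem_map.mp hπ
    exact (pp_spec e (hprime p hp)).2

theorem ee_coe (π : {π : Polynomial F // π.Monic ∧ Irreducible π}) :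
    ee e π.1 = (e π : ℕ) := by
  unfold ee; rw [dif_pos π.2, Subtype.coe_eta]

/-- the completely multiplicative counterpart on `ℕ` -/
noncomputable def fC (t : ℂ) : ℕ →*₀ ℂ where
  toFun n := if n = 0 then 0 else t ^ D e n
  map_zero' := by simp
  map_one' := by simp [D_one]
  map_mul' m n := by
    rcases eq_or_ne m 0 with rfl | hm
    · simp
    rcases eq_or_ne n 0 with rfl | hn
    · simp
    simp [hm, hn, mul_ne_zero hm hn, D_mul e hm hn, pow_add]

theorem fC_apply (t : ℂ) (n : ℕ) :
    fC e t n = if n = 0 then 0 else t ^ D e n := rfl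

end E

/-- the equivalence between monic polynomials of degree `n` and coefficient tuples -/
noncomputable def fiberEquiv (n : ℕ) :
    {x : {f : Polynomial F // f.Monic} // x.1.natDegree = n} ≃ (Fin n → F) :=
  ((Equiv.subtypeSubtypeEquivSubtypeInter _ _).trans (monicEquivDegreeLT n)).trans
    (degreeLTEquiv F n).toEquiv

end Stmt9Aux



/-- For every complex `s` with `Re(s) > 1`, the family `(1 - q^(-s·deg π))⁻¹`
indexed by the monic irreducible polynomials `π ∈ F_q[X]` is multipliable, and
its product equals the sum of the summable family `q^(-s·deg f)` indexed by all
monic polynomials `f ∈ F_q[X]`; in particular this product equals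
`(1 - q^(1-s))⁻¹`. -/
theorem stmt_9 (F : Type*) [Field F] [Fintype F] (s : ℂ) (hs : 1 < s.re) :
    Summable
      (fun f : {f : Polynomial F // f.Monic} =>
        (Fintype.card F : ℂ) ^ (-s * (f.1.natDegree : ℂ))) ∧
    HasProd
      (fun π : {π : Polynomial F // π.Monic ∧ Irreducible π} =>
        (1 - (Fintype.card F : ℂ) ^ (-s * (π.1.natDegree : ℂ)))⁻¹)
      (∑' f : {f : Polynomial F // f.Monic},
        (Fintype.card F : ℂ) ^ (-s * (f.1.natDegree : ℂ))) ∧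
    (∑' f : {f : Polynomial F // f.Monic},
        (Fintype.card F : ℂ) ^ (-s * (f.1.natDegree : ℂ))) =
      (1 - (Fintype.card F : ℂ) ^ (1 - s))⁻¹ := by
  classical
  set q : ℕ := Fintype.card F with hq
  have hq1 : 1 < q := Fintype.one_lt_card
  have hq0R : (0:ℝ) < (q:ℝ) := by positivity
  set t : ℂ := (q : ℂ) ^ (-s : ℂ) with ht
  have hcast : ∀ n : ℕ, (q:ℂ) ^ (-s * (n:ℂ)) = t ^ n := fun n =>
    Complex.cpow_mul_nat _ _ _
  have htnorm : ‖t‖ = (q:ℝ) ^ (-s.re) := by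
    rw [ht, show ((q:ℕ):ℂ) = ((q:ℝ):ℂ) by push_cast; ring,
      Complex.norm_cpow_eq_rpow_re_of_pos hq0R]
    simp
  have hqt : (q:ℝ) * ‖t‖ = (q:ℝ) ^ (1 - s.re) := by
    rw [htnorm, sub_eq_add_neg, Real.rpow_add hq0R, Real.rpow_one]
  have hqtlt : (q:ℝ) * ‖t‖ < 1 := by
    rw [hqt]
    exact Real.rpow_lt_one_of_one_lt_of_neg (by exact_mod_cast hq1) (by linarith)
  have ht0 : t ≠ 0 := by
    rw [ht]
    intro h
    rw [Complex.cpow_eq_zero_iff] at h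
    exact_mod_cast absurd h.1 (by exact_mod_cast (by omega : q ≠ 0))
  -- fiber counting
  haveI hfibFin : ∀ n : ℕ,
      Fintype {x : {f : Polynomial F // f.Monic} // x.1.natDegree = n} :=
    fun n => Fintype.ofEquiv _ (Stmt9Aux.fiberEquiv n).symm
  have hcard : ∀ n : ℕ,
      Fintype.card {x : {f : Polynomial F // f.Monic} // x.1.natDegree = n} = q ^ n := by
    intro n
    rw [Fintype.card_congr (Stmt9Aux.fiberEquiv n)]
    simp [hq]
  let deg : {f : Polynomial F // f.Monic} → ℕ := fun f => f.1.natDegree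
  let σ := Equiv.sigmaFiberEquiv deg
  have hσdeg : ∀ x : Σ n : ℕ, {f : {f : Polynomial F // f.Monic} // deg f = n},
      deg (σ x) = x.1 := fun x => x.2.2
  have hGsum : Summable (fun f : {f : Polynomial F // f.Monic} => ‖t‖ ^ deg f) := by
    rw [← Equiv.summable_iff σ]
    have hnn : ∀ x : Σ n : ℕ, {f : {f : Polynomial F // f.Monic} // deg f = n},
        0 ≤ ‖t‖ ^ deg (σ x) := fun x => pow_nonneg (norm_nonneg t) _
    refine (summable_sigma_of_nonneg hnn).mpr ⟨fun n => Summable.of_finite, ?_⟩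
    have houter : ∀ n : ℕ,
        (∑' y : {f : {f : Polynomial F // f.Monic} // deg f = n}, ‖t‖ ^ deg (σ ⟨n, y⟩))
          = ((q:ℝ) * ‖t‖) ^ n := by
      intro n
      rw [tsum_congr (fun y => show ‖t‖ ^ deg (σ ⟨n, y⟩) = ‖t‖ ^ n by
        rw [hσdeg ⟨n, y⟩])]
      rw [tsum_fintype, Finset.sum_const, Finset.card_univ, hcard n, nsmul_eq_mul,
        mul_pow, Nat.cast_pow]
    rw [funext houter]
    exact summable_geometric_of_lt_one (by positivity) hqtlt
  have hsumg : Summable (fun f : {f : Polynomial F // f.Monic} => t ^ deg f) := by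
    refine Summable.of_norm ?_
    refine hGsum.congr fun g => ?_
    rw [norm_pow]
  have hval : (∑' f : {f : Polynomial F // f.Monic}, t ^ deg f) = (1 - (q:ℂ) * t)⁻¹ := by
    have hsig : Summable (fun c : Σ n : ℕ, {f : {f : Polynomial F // f.Monic} // deg f = n} =>
        t ^ deg (σ c)) := (σ.summable_iff.mpr hsumg).congr fun _ => rfl
    rw [← σ.tsum_eq, hsig.tsum_sigma]
    have hinner : ∀ n : ℕ,
        (∑' y : {f : {f : Polynomial F // f.Monic} // deg f = n}, t ^ deg (σ ⟨n, y⟩))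
          = ((q:ℂ) * t) ^ n := by
      intro n
      rw [tsum_congr (fun y => show t ^ deg (σ ⟨n, y⟩) = t ^ n by rw [hσdeg ⟨n, y⟩])]
      rw [tsum_fintype, Finset.sum_const, Finset.card_univ, hcard n, nsmul_eq_mul,
        mul_pow, Nat.cast_pow]
    rw [tsum_congr hinner]
    refine tsum_geometric_of_norm_lt_one ?_
    rw [norm_mul, Complex.norm_natCast]
    exact hqtlt
  -- the transfer to ℕ
  haveI : Countable (Polynomial F) := Stmt9Aux.countable_poly
  haveI : Infinite {π : Polynomial F // π.Monic ∧ Irreducible π} :=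
    Set.infinite_coe_iff.mpr Stmt9Aux.infinite_monic_irred
  haveI : Infinite Nat.Primes := Set.infinite_coe_iff.mpr Nat.infinite_setOf_prime
  let e : {π : Polynomial F // π.Monic ∧ Irreducible π} ≃ Nat.Primes :=
    (nonempty_equiv_of_countable).some
  let fC := Stmt9Aux.fC e t
  have hfCPhi : ∀ g : {f : Polynomial F // f.Monic},
      fC (Stmt9Aux.Phi e g.1) = t ^ deg g := fun g => by
    rw [Stmt9Aux.fC_apply, if_neg (Stmt9Aux.Phi_ne_zero e g.2), Stmt9Aux.D_Phi e g.2]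
  have hΦinj : Function.Injective
      (fun g : {f : Polynomial F // f.Monic} => Stmt9Aux.Phi e g.1) :=
    fun a b hab => Subtype.ext (Stmt9Aux.Phi_injOn e a.2 b.2 hab)
  have hsupport : ∀ n : ℕ,
      n ∉ Set.range (fun g : {f : Polynomial F // f.Monic} => Stmt9Aux.Phi e g.1) →
      fC n = 0 := by
    intro n hn
    rcases eq_or_ne n 0 with rfl | h0
    · rw [Stmt9Aux.fC_apply, if_pos rfl]
    obtain ⟨g, hg, hPhi⟩ := Stmt9Aux.Phi_surj e h0
    exact absurd ⟨⟨g, hg⟩, hPhi⟩ hn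
  have hfCsummable : Summable (fun n : ℕ => ‖fC n‖) := by
    refine (Function.Injective.summable_iff hΦinj
      (fun n hn => by rw [hsupport n hn, norm_zero])).mp ?_
    refine hGsum.congr fun g => ?_
    show ‖t‖ ^ deg g = ‖fC (Stmt9Aux.Phi e g.1)‖
    rw [hfCPhi g, norm_pow]
  have hEuler := EulerProduct.eulerProduct_completely_multiplicative_hasProd hfCsummable
  have htsum : (∑' n : ℕ, fC n) = ∑' f : {f : Polynomial F // f.Monic}, t ^ deg f := by
    refine tsum_eq_tsum_of_ne_zero_bij (fun x => Stmt9Aux.Phi e x.1.1) ?_ ?_ ?_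
    · intro x y hxy
      exact Subtype.ext (hΦinj hxy)
    · intro n hn
      have h0 : n ≠ 0 := by
        intro h
        rw [Function.mem_support, h, Stmt9Aux.fC_apply, if_pos rfl] at hn
        exact hn rfl
      obtain ⟨g, hg, hPhi⟩ := Stmt9Aux.Phi_surj e h0
      exact ⟨⟨⟨g, hg⟩, by simp only [Function.mem_support]; exact pow_ne_zero _ ht0⟩, hPhi⟩
    · intro x
      exact hfCPhi x.1
  have hprod : HasProd
      (fun π : {π : Polynomial F // π.Monic ∧ Irreducible π} =>
        (1 - t ^ π.1.natDegree)⁻¹)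
      (∑' f : {f : Polynomial F // f.Monic}, t ^ deg f) := by
    rw [← htsum]
    refine HasProd.congr_fun
      ((Equiv.hasProd_iff e (f := fun p : Nat.Primes => (1 - fC p)⁻¹)).mpr hEuler)
      fun π => ?_
    have hfCe : fC ((e π : Nat.Primes) : ℕ) = t ^ π.1.natDegree := by
      have hp : ((e π : Nat.Primes) : ℕ).Prime := (e π).2
      rw [Stmt9Aux.fC_apply, if_neg hp.ne_zero, Stmt9Aux.D_prime e hp, ← Stmt9Aux.ee_coe e π,
        Stmt9Aux.pp_ee e π.2]
    show (1 - t ^ π.1.natDegree)⁻¹ = (1 - fC ((e π : Nat.Primes) : ℕ))⁻¹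
    rw [hfCe]
  have hq1s : (q : ℂ) ^ ((1:ℂ) - s) = (q:ℂ) * t := by
    rw [sub_eq_add_neg, Complex.cpow_add _ _ (by exact_mod_cast (by omega : q ≠ 0)),
      Complex.cpow_one, ht]
  refine ⟨?_, ?_, ?_⟩
  · exact (summable_congr fun f => hcast (deg f)).mpr hsumg
  · rw [tsum_congr fun f => hcast (deg f)]
    exact hprod.congr_fun fun π => by rw [hcast π.1.natDegree]
  · rw [tsum_congr fun f => hcast (deg f), hval, hq1s]
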